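/- In a tree K with nonnegative edge costs, let u,v be a pair of leaves maximizing the path cost c(P_{uv}) (the diameter Δ(K)). Then a depth-first traversal from u to v yields a walk of cost 2·c(K) − Δ(K) visiting all leaves, so the metric-closure minimum spanning tree of the leaves of K has cost at most 2·c(K) − Δ(K). -/

import Mathlib

open scoped Classical

noncomputable section

variable {V : Type*}

/-- Cost of a walk: sum of the costs of its edges (edges repeated by the walk are
counted with multiplicity). -/
def walkCost (c : Sym2 V → ℝ) {G : SimpleGraph V} {u v : V} (p : G.Walk u v) : ℝ :=
  (p.edges.map c).sum

namespace Stmt8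


lemma walkCost_nil (c : Sym2 V → ℝ) {G : SimpleGraph V} {u : V} :
    walkCost c (SimpleGraph.Walk.nil : G.Walk u u) = 0 := rfl

lemma walkCost_cons (c : Sym2 V → ℝ) {G : SimpleGraph V} {u v w : V}
    (h : G.Adj u v) (p : G.Walk v w) :
    walkCost c (SimpleGraph.Walk.cons h p) = c s(u, v) + walkCost c p := by
  simp [walkCost]

lemma walkCost_append (c : Sym2 V → ℝ) {G : SimpleGraph V} {u v w : V}
    (p : G.Walk u v) (q : G.Walk v w) :
    walkCost c (p.append q) = walkCost c p + walkCost c q := by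
  simp [walkCost]

lemma walkCost_nonneg {c : Sym2 V → ℝ} (hc : ∀ e, 0 ≤ c e) {G : SimpleGraph V} {u v : V}
    (p : G.Walk u v) : 0 ≤ walkCost c p := by
  apply List.sum_nonneg
  intro x hx
  obtain ⟨e, _, rfl⟩ := List.mem_map.1 hx
  exact hc e

lemma walkCost_dropUntil_le {c : Sym2 V → ℝ} (hc : ∀ e, 0 ≤ c e) {G : SimpleGraph V}
    {u v x : V} (p : G.Walk u v) (hx : x ∈ p.support) :
    walkCost c (p.dropUntil x hx) ≤ walkCost c p := by
  conv_rhs => rw [← p.take_spec hx]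
  rw [walkCost_append]
  have := walkCost_nonneg hc (p.takeUntil x hx)
  linarith

lemma walkCost_bypass_le {c : Sym2 V → ℝ} (hc : ∀ e, 0 ≤ c e) {G : SimpleGraph V}
    {u v : V} (p : G.Walk u v) : walkCost c p.bypass ≤ walkCost c p := by
  induction p with
  | nil => simp [SimpleGraph.Walk.bypass]
  | @cons a b d h q ih =>
    rw [SimpleGraph.Walk.bypass]
    split_ifs with hs
    · calc walkCost c (q.bypass.dropUntil _ hs) ≤ walkCost c q.bypass :=
            walkCost_dropUntil_le hc _ hs
        _ ≤ walkCost c q := ih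
        _ ≤ _ := by rw [walkCost_cons]; have := hc s(a, b); linarith
    · rw [walkCost_cons, walkCost_cons]
      linarith



variable {α : Type*}

def consecEdges : List α → List (Sym2 α)
  | [] => []
  | [_] => []
  | a :: b :: t => s(a, b) :: consecEdges (b :: t)

@[simp] lemma consecEdges_nil : consecEdges ([] : List α) = [] := rfl
@[simp] lemma consecEdges_single (a : α) : consecEdges [a] = [] := rfl
@[simp] lemma consecEdges_cons_cons (a b : α) (t : List α) :
    consecEdges (a :: b :: t) = s(a, b) :: consecEdges (b :: t) := rfl

lemma mem_of_mem_consecEdges {l : List α} {e : Sym2 α} (he : e ∈ consecEdges l) :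
    ∀ a ∈ e, a ∈ l := by
  induction l with
  | nil => simp at he
  | cons x t ih =>
    cases t with
    | nil => simp at he
    | cons y t' =>
      rw [consecEdges_cons_cons] at he
      rcases List.mem_cons.1 he with rfl | he'
      · intro a ha
        rcases Sym2.mem_iff.1 ha with rfl | rfl <;> simp
      · intro a ha
        exact List.mem_cons_of_mem _ (ih he' a ha)

lemma consecEdges_nodup {l : List α} (hl : l.Nodup) : (consecEdges l).Nodup := by
  induction l with
  | nil => simp
  | cons x t ih =>
    cases t with
    | nil => simp
    | cons y t' =>
      rw [consecEdges_cons_cons]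
      refine List.Nodup.cons ?_ (ih (List.Nodup.of_cons hl))
      intro hmem
      have := mem_of_mem_consecEdges hmem x (by simp)
      exact (List.nodup_cons.1 hl).1 this

lemma consecEdges_not_isDiag {l : List α} (hl : l.Nodup) {e : Sym2 α}
    (he : e ∈ consecEdges l) : ¬ e.IsDiag := by
  induction l with
  | nil => simp at he
  | cons x t ih =>
    cases t with
    | nil => simp at he
    | cons y t' =>
      rw [consecEdges_cons_cons] at he
      rcases List.mem_cons.1 he with rfl | he'
      · have hxy : x ≠ y := by
          intro h; subst h; exact (List.nodup_cons.1 hl).1 (by simp)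
        simpa using hxy
      · exact ih (List.Nodup.of_cons hl) he'

lemma consecEdges_length {l : List α} : (consecEdges l).length = l.length - 1 := by
  induction l with
  | nil => simp
  | cons x t ih =>
    cases t with
    | nil => simp
    | cons y t' => rw [consecEdges_cons_cons]; simp_all

lemma consecEdges_map {β : Type*} (f : α → β) (l : List α) :
    consecEdges (l.map f) = (consecEdges l).map (Sym2.map f) := by
  induction l with
  | nil => simp
  | cons x t ih =>
    cases t with
    | nil => simp
    | cons y t' =>
      simp only [List.map_cons, consecEdges_cons_cons] at *
      rw [ih]
      simp [Sym2.map_pair_eq]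

/-- Sum of `w` over consecutive pairs. -/
def sC (w : Sym2 α → ℝ) (l : List α) : ℝ := ((consecEdges l).map w).sum

@[simp] lemma sC_nil (w : Sym2 α → ℝ) : sC w ([] : List α) = 0 := rfl
@[simp] lemma sC_single (w : Sym2 α → ℝ) (a : α) : sC w [a] = 0 := rfl
lemma sC_cons_cons (w : Sym2 α → ℝ) (a b : α) (t : List α) :
    sC w (a :: b :: t) = w s(a, b) + sC w (b :: t) := by simp [sC]

lemma sC_nonneg {w : Sym2 α → ℝ} (hw : ∀ e, 0 ≤ w e) (l : List α) : 0 ≤ sC w l := by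
  apply List.sum_nonneg
  intro x hx
  obtain ⟨e, _, rfl⟩ := List.mem_map.1 hx
  exact hw e

lemma sC_cons_le {w : Sym2 α → ℝ} (hw : ∀ e, 0 ≤ w e) (a : α) (l : List α) :
    sC w l ≤ sC w (a :: l) := by
  cases l with
  | nil => simp
  | cons b t => rw [sC_cons_cons]; have := hw s(a, b); linarith

/-- key sublist lemma -/
lemma sC_sublist_cons {w : Sym2 α → ℝ} (hw : ∀ e, 0 ≤ w e)
    (htri : ∀ a b c : α, w s(a, c) ≤ w s(a, b) + w s(b, c))
    {l' l : List α} (hsub : List.Sublist l' l) : ∀ a, sC w (a :: l') ≤ sC w (a :: l) := by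
  induction hsub with
  | slnil => intro a; simp
  | @cons l₁ l₂ b _ ih =>
    intro a
    cases l₁ with
    | nil =>
      have h0 : (0:ℝ) ≤ sC w (a :: b :: l₂) := sC_nonneg hw _
      simpa using h0
    | cons c t =>
      rw [sC_cons_cons]
      calc w s(a, c) + sC w (c :: t)
          ≤ (w s(a, b) + w s(b, c)) + sC w (c :: t) := by
            have := htri a b c; linarith
        _ = w s(a, b) + sC w (b :: c :: t) := by rw [sC_cons_cons]; ring
        _ ≤ w s(a, b) + sC w (b :: l₂) := by have := ih b; linarith
        _ = sC w (a :: b :: l₂) := by rw [sC_cons_cons]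
  | @cons_cons l₁ l₂ b _ ih =>
    intro a
    rw [sC_cons_cons, sC_cons_cons]
    have := ih b; linarith

lemma sC_suffix_le {w : Sym2 α → ℝ} (hw : ∀ e, 0 ≤ w e) (l₁ l₂ : List α) :
    sC w l₂ ≤ sC w (l₁ ++ l₂) := by
  induction l₁ with
  | nil => simp
  | cons x t ih => exact le_trans ih (sC_cons_le hw _ _)

lemma sC_sublist {w : Sym2 α → ℝ} (hw : ∀ e, 0 ≤ w e)
    (htri : ∀ a b c : α, w s(a, c) ≤ w s(a, b) + w s(b, c))
    {l' l : List α} (hsub : List.Sublist l' l) : sC w l' ≤ sC w l := by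
  induction hsub with
  | slnil => exact le_refl _
  | cons b h ih => exact le_trans ih (sC_cons_le hw _ _)
  | cons_cons b h => exact sC_sublist_cons hw htri h _

/-- The path graph along a list. -/
def listGraph (l : List α) : SimpleGraph α := SimpleGraph.fromEdgeSet {e | e ∈ consecEdges l}

lemma listGraph_edgeSet {l : List α} (hl : l.Nodup) :
    (listGraph l).edgeSet = {e | e ∈ consecEdges l} := by
  rw [listGraph, SimpleGraph.edgeSet_fromEdgeSet]
  ext e
  simp only [Set.mem_diff, Set.mem_setOf_eq, and_iff_left_iff_imp]
  intro he hd
  exact consecEdges_not_isDiag hl he hd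

lemma listGraph_mono {l l' : List α} (h : ∀ e ∈ consecEdges l, e ∈ consecEdges l') :
    listGraph l ≤ listGraph l' := SimpleGraph.fromEdgeSet_mono h

lemma listGraph_reachable {l : List α} (hl : l.Nodup) (hne : l ≠ []) :
    ∀ x ∈ l, (listGraph l).Reachable (l.head hne) x := by
  induction l with
  | nil => simp at hne
  | cons a t ih =>
    intro x hx
    rcases List.mem_cons.1 hx with rfl | hx'
    · rfl
    · have htne : t ≠ [] := by rintro rfl; simp at hx'
      obtain ⟨b, t', rfl⟩ := List.exists_cons_of_ne_nil htne
      have hadj : (listGraph (a :: b :: t')).Adj a b := by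
        rw [listGraph, SimpleGraph.fromEdgeSet_adj]
        refine ⟨by simp, ?_⟩
        intro h; subst h; exact (List.nodup_cons.1 hl).1 (by simp)
      have hmono : listGraph (b :: t') ≤ listGraph (a :: b :: t') :=
        listGraph_mono (by intro e he; rw [consecEdges_cons_cons]; exact List.mem_cons_of_mem _ he)
      have : (listGraph (b :: t')).Reachable b x := by
        have := ih (List.Nodup.of_cons hl) (by simp) x hx'
        simpa using this
      exact (hadj.reachable).trans (SimpleGraph.Reachable.mono hmono this)

lemma listGraph_connected {l : List α} (hl : l.Nodup) (hne : l ≠ [])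
    (hall : ∀ x : α, x ∈ l) : (listGraph l).Connected := by
  rw [SimpleGraph.connected_iff]
  constructor
  · intro x y
    exact ((listGraph_reachable hl hne x (hall x)).symm).trans
      (listGraph_reachable hl hne y (hall y))
  · obtain ⟨a, _, rfl⟩ := List.exists_cons_of_ne_nil hne
    exact ⟨a⟩

lemma listGraph_adj_head {a : α} {t : List α} (hl : (a :: t).Nodup) {z : α}
    (h : (listGraph (a :: t)).Adj a z) : t ≠ [] ∧ ∃ h' : t ≠ [], z = t.head h' := by
  rw [listGraph, SimpleGraph.fromEdgeSet_adj] at h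
  cases t with
  | nil => simp at h
  | cons b t' =>
    refine ⟨by simp, by simp, ?_⟩
    rcases List.mem_cons.1 h.1 with he | he
    · -- s(a,z) = s(a,b)
      rw [Sym2.eq_iff] at he
      rcases he with ⟨-, rfl⟩ | ⟨rfl, rfl⟩
      · simp
      · exact absurd rfl h.2
    · exfalso
      have := mem_of_mem_consecEdges he a (by simp)
      exact (List.nodup_cons.1 hl).1 this

lemma listGraph_acyclic {l : List α} (hl : l.Nodup) : (listGraph l).IsAcyclic := by
  induction l with
  | nil =>
    intro v c hc
    cases c with
    | nil => exact hc.ne_nil rfl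
    | cons h q => rw [listGraph, SimpleGraph.fromEdgeSet_adj] at h; simp at h
  | cons a t ih =>
    intro v c hc
    by_cases ha : a ∈ c.support
    · -- rotate so the cycle starts at a
      have hc' := hc.rotate ha
      set c' := c.rotate a ha with hc'def
      clear_value c'
      cases c' with
      | nil => exact hc'.ne_nil rfl
      | @cons _ z _ hadj q =>
        -- first edge s(a, z); last edge of q contains a
        have hz := listGraph_adj_head hl hadj
        obtain ⟨htne, _, rfl⟩ := hz
        -- q : Walk z a; q.reverse : Walk a z
        have hzne : t.head htne ≠ a := by
          intro h
          have : (listGraph (a :: t)).Adj a a := h ▸ hadj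
          exact (SimpleGraph.irrefl _) this
        obtain ⟨w', h2, q', hqr⟩ := SimpleGraph.Walk.exists_eq_cons_of_ne
          (by exact fun h => hzne h.symm) q.reverse
        obtain ⟨htne2, hw'⟩ := listGraph_adj_head hl h2
        obtain ⟨htne3, rfl⟩ := hw'
        have hedge : s(a, t.head htne3) ∈ q.edges := by
          have hmem : s(a, t.head htne3) ∈ q.reverse.edges := by
            rw [hqr]; simp
          rwa [SimpleGraph.Walk.edges_reverse, List.mem_reverse] at hmem
        have hnodup := hc'.edges_nodup
        rw [SimpleGraph.Walk.edges_cons] at hnodup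
        exact (List.nodup_cons.1 hnodup).1 hedge
    · -- transfer to smaller graph
      cases t with
      | nil =>
        -- no edges at all: c must be nil
        cases c with
        | nil => exact hc.ne_nil rfl
        | cons h q =>
          rw [listGraph, SimpleGraph.fromEdgeSet_adj] at h
          simp at h
      | cons b t' =>
        have hsub : ∀ e ∈ c.edges, e ∈ (listGraph (b :: t')).edgeSet := by
          intro e he
          have heK : e ∈ (listGraph (a :: b :: t')).edgeSet := c.edges_subset_edgeSet he
          rw [listGraph_edgeSet hl] at heK
          rw [listGraph_edgeSet (List.Nodup.of_cons hl)]
          rw [consecEdges_cons_cons] at heK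
          rcases List.mem_cons.1 heK with rfl | he'
          · exfalso
            exact ha (SimpleGraph.Walk.fst_mem_support_of_mem_edges c he)
          · exact he'
        have := (hc.transfer hsub)
        exact ih (List.Nodup.of_cons hl) _ this

lemma listGraph_isTree {l : List α} (hl : l.Nodup) (hne : l ≠ [])
    (hall : ∀ x : α, x ∈ l) : (listGraph l).IsTree :=
  ⟨listGraph_connected hl hne hall, listGraph_acyclic hl⟩

lemma listGraph_finsum (f : Sym2 α → ℝ) {l : List α} (hl : l.Nodup) :
    (∑ᶠ e ∈ (listGraph l).edgeSet, f e) = ((consecEdges l).map f).sum := by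
  rw [listGraph_edgeSet hl, ← List.coe_toFinset, finsum_mem_coe_finset,
    List.sum_toFinset _ (consecEdges_nodup hl)]



open SimpleGraph Walk

variable {K : SimpleGraph V}

lemma isPath_concat {u v w : V} {p : K.Walk u v} (hp : p.IsPath) (h : K.Adj v w)
    (hw : w ∉ p.support) : (p.concat h).IsPath := by
  rw [← SimpleGraph.Walk.isPath_reverse_iff, SimpleGraph.Walk.reverse_concat,
    SimpleGraph.Walk.cons_isPath_iff]
  refine ⟨hp.reverse, ?_⟩
  simpa [SimpleGraph.Walk.support_reverse] using hw

lemma path_unique (hK : K.IsTree) {a b : V} {p q : K.Walk a b}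
    (hp : p.IsPath) (hq : q.IsPath) : p = q :=
  ((hK.existsUnique_path a b).unique hp hq)

/-- In a tree, an edge between two vertices on a path is an edge of the path. -/
lemma edge_mem_of_path (hK : K.IsTree) {x y a b : V} (p : K.Walk x y) (hp : p.IsPath)
    (hadj : K.Adj a b) (ha : a ∈ p.support) (hb : b ∈ p.support) : s(a, b) ∈ p.edges := by
  induction p with
  | nil =>
    simp only [SimpleGraph.Walk.support_nil, List.mem_singleton] at ha hb
    subst ha; subst hb
    exact absurd hadj (K.irrefl)
  | @cons x c y h r ih =>
    have hr : r.IsPath := hp.of_cons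
    have hxr : x ∉ r.support := (SimpleGraph.Walk.cons_isPath_iff h r).1 hp |>.2
    rw [SimpleGraph.Walk.support_cons, List.mem_cons] at ha hb
    have key : ∀ z : V, K.Adj x z → z ∈ r.support → z = c := by
      intro z hxz hzr
      have hr' : (r.takeUntil z hzr).IsPath := hr.takeUntil hzr
      have hxr' : x ∉ (r.takeUntil z hzr).support :=
        fun hmem => hxr (SimpleGraph.Walk.support_takeUntil_subset _ hzr hmem)
      have hpath1 : (SimpleGraph.Walk.cons h (r.takeUntil z hzr)).IsPath :=
        (SimpleGraph.Walk.cons_isPath_iff h _).2 ⟨hr', hxr'⟩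
      have hpath2 : (SimpleGraph.Walk.cons hxz SimpleGraph.Walk.nil).IsPath := by
        simp [SimpleGraph.Walk.cons_isPath_iff, hxz.ne]
      have := path_unique hK hpath1 hpath2
      have hsup := congrArg SimpleGraph.Walk.support this
      rw [SimpleGraph.Walk.support_cons, SimpleGraph.Walk.support_cons,
        SimpleGraph.Walk.support_nil] at hsup
      rw [List.cons_eq_cons] at hsup
      have h2 := hsup.2
      rw [SimpleGraph.Walk.support_eq_cons, List.cons_eq_cons] at h2
      exact h2.1.symm
    rcases ha with rfl | har
    · rcases hb with rfl | hbr
      · exact absurd hadj (K.irrefl)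
      · have : b = c := key b hadj hbr
        subst this
        simp
    · rcases hb with rfl | hbr
      · have : a = c := key a hadj.symm har
        subst this
        rw [Sym2.eq_swap]
        simp
      · rw [SimpleGraph.Walk.edges_cons, List.mem_cons]
        exact Or.inr (ih hr har hbr)

/-- Dichotomy for paths from a common root to two adjacent vertices in a tree. -/
lemma path_dichotomy (hK : K.IsTree) {u x y : V} (hadj : K.Adj x y)
    (Px : K.Walk u x) (Py : K.Walk u y) (hPx : Px.IsPath) (hPy : Py.IsPath) :
    Px = Py.concat hadj.symm ∨ Py = Px.concat hadj := by
  by_cases hx : x ∈ Py.support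
  · right
    have hyne : x ≠ y := hadj.ne
    have ht : (Py.takeUntil x hx).IsPath := hPy.takeUntil hx
    have hynot : y ∉ (Py.takeUntil x hx).support := by
      intro hy
      have hnodup : Py.support.Nodup := hPy.support_nodup
      rw [← Py.take_spec hx, SimpleGraph.Walk.support_append] at hnodup
      have hdisj := List.disjoint_of_nodup_append hnodup
      have hy2 : y ∈ (Py.dropUntil x hx).support.tail :=
        SimpleGraph.Walk.end_mem_tail_support_of_ne hadj.ne _
      exact hdisj hy hy2
    have : ((Py.takeUntil x hx).concat hadj).IsPath := isPath_concat ht hadj hynot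
    have h2 : Py = (Py.takeUntil x hx).concat hadj := path_unique hK hPy this
    have h3 : Px = Py.takeUntil x hx := path_unique hK hPx ht
    rw [h3, ← h2]
  · left
    exact path_unique hK hPx (isPath_concat hPy hadj.symm hx)

/-- An interior vertex of a path has two distinct neighbors on the path. -/
lemma two_neighbors {a b x : V} (p : K.Walk a b) (hp : p.IsPath)
    (hx : x ∈ p.support) (hxa : x ≠ a) (hxb : x ≠ b) :
    ∃ z1 z2 : V, z1 ≠ z2 ∧ K.Adj x z1 ∧ K.Adj x z2 ∧ z1 ∈ p.support ∧ z2 ∈ p.support := by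
  have hrev : x ∈ (p.takeUntil x hx).reverse.support := by
    rw [SimpleGraph.Walk.support_reverse, List.mem_reverse]
    exact SimpleGraph.Walk.end_mem_support _
  obtain ⟨z1, h1, r1, hr1⟩ :=
    SimpleGraph.Walk.exists_eq_cons_of_ne (Ne.symm hxa).symm (p.takeUntil x hx).reverse
  obtain ⟨z2, h2, r2, hr2⟩ :=
    SimpleGraph.Walk.exists_eq_cons_of_ne hxb (p.dropUntil x hx)
  have hz1mem : z1 ∈ (p.takeUntil x hx).support := by
    have : z1 ∈ (p.takeUntil x hx).reverse.support := by
      rw [hr1, SimpleGraph.Walk.support_cons]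
      exact List.mem_cons_of_mem _ (SimpleGraph.Walk.start_mem_support _)
    rwa [SimpleGraph.Walk.support_reverse, List.mem_reverse] at this
  have hz2mem : z2 ∈ (p.dropUntil x hx).support.tail := by
    rw [hr2, SimpleGraph.Walk.support_cons]
    exact SimpleGraph.Walk.start_mem_support _
  have hne : z1 ≠ z2 := by
    intro h
    have hnodup : p.support.Nodup := hp.support_nodup
    rw [← p.take_spec hx, SimpleGraph.Walk.support_append] at hnodup
    exact (List.disjoint_of_nodup_append hnodup) hz1mem (h ▸ hz2mem)
  refine ⟨z1, z2, hne, h1, h2, ?_, ?_⟩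
  · exact SimpleGraph.Walk.support_takeUntil_subset _ hx hz1mem
  · exact SimpleGraph.Walk.support_dropUntil_subset _ hx (List.mem_of_mem_tail hz2mem)

lemma mem_support_of_edge {a b : V} {p : K.Walk a b} {e : Sym2 V} (he : e ∈ p.edges) :
    ∀ z ∈ e, z ∈ p.support := by
  induction e using Sym2.ind with
  | _ c d =>
    intro z hz
    rcases Sym2.mem_iff.1 hz with rfl | rfl
    · exact p.fst_mem_support_of_mem_edges he
    · exact p.snd_mem_support_of_mem_edges he

lemma main [Fintype V] (hK : K.IsTree) :
    ∀ (n : ℕ) (S : Finset V), S.card ≤ n → ∀ (u v : V), u ∈ S → v ∈ S →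
    (∀ a ∈ S, ∀ b ∈ S, ∃ p : K.Walk a b, p.IsPath ∧ ∀ x ∈ p.support, x ∈ S) →
    ∃ (p q : K.Walk u v), q.IsPath ∧ (∀ x ∈ S, x ∈ p.support) ∧
      ((p.edges : Multiset (Sym2 V)) + (q.edges : Multiset (Sym2 V)) =
        2 • (K.edgeFinset.filter (fun e => ∀ x ∈ e, x ∈ S)).val) := by
  intro n
  induction n with
  | zero =>
    intro S hS u v hu hv _
    rw [Nat.le_zero, Finset.card_eq_zero] at hS
    subst hS
    simp at hu
  | succ n ih =>
    intro S hS u v huS hvS hconn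
    obtain ⟨q0, hq0, hq0S⟩ := hconn u huS v hvS
    by_cases hcov : ∀ x ∈ S, x ∈ q0.support
    · refine ⟨q0, q0, hq0, hcov, ?_⟩
      have hval : (K.edgeFinset.filter (fun e => ∀ x ∈ e, x ∈ S)).val
          = (q0.edges : Multiset (Sym2 V)) := by
        rw [Multiset.Nodup.ext (Finset.filter _ _).nodup (by exact hq0.edges_nodup)]
        intro e
        rw [Finset.mem_val, Finset.mem_filter]
        constructor
        · rintro ⟨heE, hall⟩
          induction e using Sym2.ind with
          | _ a b =>
            have hadj : K.Adj a b := (SimpleGraph.mem_edgeSet K).1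
              ((SimpleGraph.mem_edgeFinset).1 heE)
            exact edge_mem_of_path hK q0 hq0 hadj
              (hcov a (hall a (Sym2.mem_mk_left a b))) (hcov b (hall b (Sym2.mem_mk_right a b)))
        · intro he
          refine ⟨(SimpleGraph.mem_edgeFinset).2 (q0.edges_subset_edgeSet he), ?_⟩
          intro z hz
          exact hq0S z (mem_support_of_edge he z hz)
      rw [hval, two_smul]
    · push_neg at hcov
      obtain ⟨x0, hx0S, hx0⟩ := hcov
      have exu := hK.existsUnique_path
      set P : (a : V) → K.Walk u a := fun a => (exu u a).choose with hPdef
      have hP : ∀ a, (P a).IsPath := fun a => (exu u a).choose_spec.1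
      have uniq : ∀ (a : V) (r : K.Walk u a), r.IsPath → r = P a :=
        fun a r hr => (exu u a).choose_spec.2 r hr
      have hT0 : (S.filter (fun z => z ∉ q0.support)).Nonempty :=
        ⟨x0, Finset.mem_filter.2 ⟨hx0S, hx0⟩⟩
      obtain ⟨x, hxT0, hxmax⟩ := Finset.exists_max_image
        (S.filter (fun z => z ∉ q0.support)) (fun a => (P a).length) hT0
      obtain ⟨hxS, hxq0⟩ := Finset.mem_filter.1 hxT0
      have hxu : x ≠ u := fun h => hxq0 (h ▸ q0.start_mem_support)
      have hxv : x ≠ v := fun h => hxq0 (h ▸ q0.end_mem_support)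
      -- the unique path from u to any a ∈ S stays in S
      have hPS : ∀ a, a ∈ S → ∀ z ∈ (P a).support, z ∈ S := by
        intro a haS
        obtain ⟨pa, hpa, hpaS⟩ := hconn u huS a haS
        rwa [uniq a pa hpa] at hpaS
      -- every S-neighbor z of x satisfies P x = (P z).concat _
      have CLM : ∀ (z : V) (hzx : K.Adj x z), z ∈ S → P x = (P z).concat hzx.symm := by
        intro z hzx hzS
        rcases path_dichotomy hK hzx (P x) (P z) (hP x) (hP z) with h | h
        · exact h
        · exfalso
          by_cases hzq0 : z ∈ q0.support
          · have htk : q0.takeUntil z hzq0 = P z := uniq z _ (hq0.takeUntil hzq0)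
            have hxPz : x ∈ (P z).support := by
              rw [h, SimpleGraph.Walk.support_concat]
              exact List.mem_append_left _ ((P x).end_mem_support)
            rw [← htk] at hxPz
            exact hxq0 (SimpleGraph.Walk.support_takeUntil_subset _ hzq0 hxPz)
          · have hzT0 : z ∈ S.filter (fun z => z ∉ q0.support) :=
              Finset.mem_filter.2 ⟨hzS, hzq0⟩
            have hle := hxmax z hzT0
            have : (P z).length = (P x).length + 1 := by
              rw [h, SimpleGraph.Walk.length_concat]
            omega
      -- existence of an S-neighbor of x
      obtain ⟨pxu, hpxu, hpxuS⟩ := hconn x hxS u huS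
      obtain ⟨y, hxy, rpxu, hpxu_eq⟩ := SimpleGraph.Walk.exists_eq_cons_of_ne hxu pxu
      have hyS : y ∈ S := by
        apply hpxuS
        rw [hpxu_eq, SimpleGraph.Walk.support_cons]
        exact List.mem_cons_of_mem _ rpxu.start_mem_support
      -- uniqueness of the S-neighbor
      have huniq : ∀ (z : V), K.Adj x z → z ∈ S → z = y := by
        intro z hxz hzS
        have h1 := CLM z hxz hzS
        have h2 := CLM y hxy hyS
        have e1 : (P x).reverse = SimpleGraph.Walk.cons hxz ((P z).reverse) := by
          rw [h1, SimpleGraph.Walk.reverse_concat]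
        have e2 : (P x).reverse = SimpleGraph.Walk.cons hxy ((P y).reverse) := by
          rw [h2, SimpleGraph.Walk.reverse_concat]
        have hs := congrArg SimpleGraph.Walk.support (e1.symm.trans e2)
        rw [SimpleGraph.Walk.support_cons, SimpleGraph.Walk.support_cons,
          SimpleGraph.Walk.support_eq_cons ((P z).reverse),
          SimpleGraph.Walk.support_eq_cons ((P y).reverse), List.cons_eq_cons] at hs
        rw [List.cons_eq_cons] at hs
        exact hs.2.1
      -- remove x from S
      have hyx : y ≠ x := hxy.ne'
      have huS' : u ∈ S.erase x := Finset.mem_erase.2 ⟨hxu.symm, huS⟩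
      have hvS' : v ∈ S.erase x := Finset.mem_erase.2 ⟨hxv.symm, hvS⟩
      have hyS' : y ∈ S.erase x := Finset.mem_erase.2 ⟨hyx, hyS⟩
      have hconn' : ∀ a ∈ S.erase x, ∀ b ∈ S.erase x,
          ∃ p : K.Walk a b, p.IsPath ∧ ∀ z ∈ p.support, z ∈ S.erase x := by
        intro a ha b hb
        obtain ⟨hax, haS⟩ := Finset.mem_erase.1 ha
        obtain ⟨hbx, hbS⟩ := Finset.mem_erase.1 hb
        obtain ⟨pab, hpab, hpabS⟩ := hconn a haS b hbS
        by_cases hxp : x ∈ pab.support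
        · exfalso
          obtain ⟨z1, z2, hz12, hadj1, hadj2, hz1m, hz2m⟩ :=
            two_neighbors pab hpab hxp (fun h => hax (h.symm)) (fun h => hbx (h.symm))
          have e1 := huniq z1 hadj1 (hpabS z1 hz1m)
          have e2 := huniq z2 hadj2 (hpabS z2 hz2m)
          exact hz12 (e1.trans e2.symm)
        · exact ⟨pab, hpab, fun t ht =>
            Finset.mem_erase.2 ⟨fun h => hxp (h ▸ ht), hpabS t ht⟩⟩
      have hcard' : (S.erase x).card ≤ n := by
        have := Finset.card_erase_of_mem hxS
        omega
      obtain ⟨p', q', hq', hcov', hmult'⟩ := ih (S.erase x) hcard' u v huS' hvS' hconn'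
      have hyp' : y ∈ p'.support := hcov' y hyS'
      refine ⟨(p'.takeUntil y hyp').append
        (SimpleGraph.Walk.cons hxy.symm (SimpleGraph.Walk.cons hxy (p'.dropUntil y hyp'))),
        q', hq', ?_, ?_⟩
      · intro z hzS
        rw [SimpleGraph.Walk.mem_support_append_iff]
        by_cases hzx : z = x
        · subst hzx
          right
          rw [SimpleGraph.Walk.support_cons, SimpleGraph.Walk.support_cons]
          exact List.mem_cons_of_mem _ List.mem_cons_self
        · have hz' : z ∈ p'.support := hcov' z (Finset.mem_erase.2 ⟨hzx, hzS⟩)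
          rw [← p'.take_spec hyp', SimpleGraph.Walk.mem_support_append_iff] at hz'
          rcases hz' with h | h
          · exact Or.inl h
          · right
            rw [SimpleGraph.Walk.support_cons, SimpleGraph.Walk.support_cons]
            exact List.mem_cons_of_mem _ (List.mem_cons_of_mem _ h)
      · -- multiset identity
        have hESdec : (K.edgeFinset.filter (fun e => ∀ z ∈ e, z ∈ S)).val
            = s(x,y) ::ₘ (K.edgeFinset.filter (fun e => ∀ z ∈ e, z ∈ S.erase x)).val := by
          have hxyE : s(x,y) ∈ K.edgeFinset := (SimpleGraph.mem_edgeFinset).2 hxy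
          have hnm : s(x,y) ∉ K.edgeFinset.filter (fun e => ∀ z ∈ e, z ∈ S.erase x) := by
            rw [Finset.mem_filter]
            rintro ⟨-, hall⟩
            have := hall x (Sym2.mem_mk_left x y)
            exact (Finset.mem_erase.1 this).1 rfl
          have hfin : K.edgeFinset.filter (fun e => ∀ z ∈ e, z ∈ S)
              = insert s(x,y) (K.edgeFinset.filter (fun e => ∀ z ∈ e, z ∈ S.erase x)) := by
            ext e
            induction e using Sym2.ind with
            | _ a b =>
              rw [Finset.mem_insert, Finset.mem_filter, Finset.mem_filter]
              constructor
              · rintro ⟨heE, hall⟩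
                by_cases hxe : x ∈ (s(a,b) : Sym2 V)
                · left
                  have hadj : K.Adj a b := (SimpleGraph.mem_edgeSet K).1
                    ((SimpleGraph.mem_edgeFinset).1 heE)
                  rcases Sym2.mem_iff.1 hxe with rfl | rfl
                  · have : b = y := huniq b hadj (hall b (Sym2.mem_mk_right _ _))
                    rw [this]
                  · have : a = y := huniq a hadj.symm (hall a (Sym2.mem_mk_left _ _))
                    rw [this, Sym2.eq_swap]
                · right
                  exact ⟨heE, fun z hz =>
                    Finset.mem_erase.2 ⟨fun h => hxe (h ▸ hz), hall z hz⟩⟩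
              · rintro (he | ⟨heE, hall⟩)
                · rw [he]
                  refine ⟨hxyE, ?_⟩
                  intro z hz
                  rcases Sym2.mem_iff.1 hz with rfl | rfl
                  · exact hxS
                  · exact hyS
                · exact ⟨heE, fun z hz => (Finset.mem_erase.1 (hall z hz)).2⟩
          rw [hfin, Finset.insert_val_of_notMem hnm]
        rw [hESdec]
        have hedges : ((p'.takeUntil y hyp').append
            (SimpleGraph.Walk.cons hxy.symm (SimpleGraph.Walk.cons hxy
              (p'.dropUntil y hyp')))).edges
            = (p'.takeUntil y hyp').edges ++
              (s(y,x) :: s(x,y) :: (p'.dropUntil y hyp').edges) := by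
          rw [SimpleGraph.Walk.edges_append, SimpleGraph.Walk.edges_cons,
            SimpleGraph.Walk.edges_cons]
        have hsplit : (p'.takeUntil y hyp').edges ++ (p'.dropUntil y hyp').edges
            = p'.edges := by
          rw [← SimpleGraph.Walk.edges_append, p'.take_spec hyp']
        rw [hedges]
        have lhs_eq : ((((p'.takeUntil y hyp').edges ++
            (s(y,x) :: s(x,y) :: (p'.dropUntil y hyp').edges)) : List (Sym2 V)) :
              Multiset (Sym2 V))
            = s(x,y) ::ₘ s(x,y) ::ₘ ((p'.edges : Multiset (Sym2 V))) := by
          rw [← hsplit]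
          simp only [← Multiset.coe_add, ← Multiset.cons_coe]
          rw [Sym2.eq_swap (a := y) (b := x)]
          rw [Multiset.add_cons, Multiset.add_cons]
        rw [lhs_eq]
        rw [Multiset.cons_add, Multiset.cons_add, hmult']
        rw [two_smul, two_smul, Multiset.cons_add, Multiset.add_cons]

variable {G : SimpleGraph V}

/-- List of vertices of a walk in order of first occurrence. -/
def firstOccs : {a b : V} → G.Walk a b → List V
  | a, _, .nil => [a]
  | a, _, .cons _ q => a :: (firstOccs q).erase a

@[simp] lemma firstOccs_nil {a : V} : firstOccs (.nil : G.Walk a a) = [a] := rfl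
@[simp] lemma firstOccs_cons {a b d : V} (h : G.Adj a b) (q : G.Walk b d) :
    firstOccs (.cons h q) = a :: (firstOccs q).erase a := rfl

lemma firstOccs_eq_cons {a b : V} (p : G.Walk a b) : ∃ t, firstOccs p = a :: t := by
  cases p <;> simp

lemma firstOccs_nodup {a b : V} (p : G.Walk a b) : (firstOccs p).Nodup := by
  induction p with
  | nil => simp
  | cons h q ih =>
    rw [firstOccs_cons]
    refine List.Nodup.cons ?_ (ih.erase _)
    intro hmem
    exact ((ih.mem_erase_iff).1 hmem).1 rfl

lemma mem_firstOccs {a b : V} (p : G.Walk a b) :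
    ∀ x, x ∈ firstOccs p ↔ x ∈ p.support := by
  induction p with
  | nil => simp
  | @cons a b d h q ih =>
    intro x
    rw [firstOccs_cons, SimpleGraph.Walk.support_cons]
    by_cases hxa : x = a
    · subst hxa; simp
    · simp only [List.mem_cons, hxa, false_or]
      rw [List.mem_erase_of_ne hxa, ih]

lemma sC_firstOccs_le {w c : Sym2 V → ℝ} (hw : ∀ e, 0 ≤ w e)
    (htri : ∀ a b c' : V, w s(a, c') ≤ w s(a, b) + w s(b, c'))
    (hedge : ∀ a b : V, G.Adj a b → w s(a, b) ≤ c s(a, b))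
    {a b : V} (p : G.Walk a b) : sC w (firstOccs p) ≤ walkCost c p := by
  induction p with
  | nil => rw [firstOccs_nil, sC_single]; simp [walkCost]
  | @cons a b d h q ih =>
    rw [firstOccs_cons, walkCost_cons]
    obtain ⟨t, ht⟩ := firstOccs_eq_cons q
    calc sC w (a :: (firstOccs q).erase a) ≤ sC w (a :: firstOccs q) :=
          sC_sublist_cons hw htri List.erase_sublist a
      _ = w s(a, b) + sC w (firstOccs q) := by rw [ht, sC_cons_cons, ← ht]
      _ ≤ c s(a, b) + walkCost c q := add_le_add (hedge a b h) ih

lemma subtype_list {P : V → Prop} (lf : List V) (h : ∀ z ∈ lf, P z) :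
    ∃ ls : List {x : V // P x}, ls.map Subtype.val = lf ∧ (lf.Nodup → ls.Nodup) ∧
      (∀ x : {x : V // P x}, x.1 ∈ lf → x ∈ ls) := by
  induction lf with
  | nil => exact ⟨[], by simp, by simp, by simp⟩
  | cons a t ih =>
    obtain ⟨ls, hmap, hnd, hmem⟩ := ih (fun z hz => h z (List.mem_cons_of_mem _ hz))
    refine ⟨⟨a, h a List.mem_cons_self⟩ :: ls, by simp [hmap], ?_, ?_⟩
    · intro hnodup
      rw [List.nodup_cons] at hnodup ⊢
      refine ⟨?_, hnd hnodup.2⟩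
      intro hmem'
      have : a ∈ ls.map Subtype.val := List.mem_map.2 ⟨_, hmem', rfl⟩
      rw [hmap] at this
      exact hnodup.1 this
    · intro x hx
      rcases List.mem_cons.1 hx with hxa | hxt
      · exact List.mem_cons.2 (Or.inl (Subtype.ext hxa))
      · exact List.mem_cons.2 (Or.inr (hmem x hxt))

end Stmt8

open Stmt8 in
/-- In a tree `K` with nonnegative edge costs, let `u, v` be a pair of
leaves maximizing the path cost (the diameter `Δ(K) = w s(u,v)`).  Then there is a walk
from `u` to `v` visiting all vertices (hence all leaves) of cost `2·c(K) - Δ(K)`, and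
consequently the metric-closure minimum spanning tree on the leaves of `K` has cost at
most `2·c(K) - Δ(K)`. -/
theorem stmt8 [Fintype V] (K : SimpleGraph V) (hK : K.IsTree)
    (c : Sym2 V → ℝ) (hc : ∀ e, 0 ≤ c e)
    -- `w` is the metric closure: `w s(a,b)` is the cost of the unique path from `a` to `b`
    (w : Sym2 V → ℝ)
    (hw : ∀ a b, ∀ p : K.Walk a b, p.IsPath → walkCost c p = w s(a, b))
    (u v : V) (hu : K.degree u = 1) (hv : K.degree v = 1)
    (hmax : ∀ a b, K.degree a = 1 → K.degree b = 1 → w s(a, b) ≤ w s(u, v)) :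
    (∃ p : K.Walk u v, (∀ x, x ∈ p.support) ∧
        walkCost c p = 2 * (∑ᶠ e ∈ K.edgeSet, c e) - w s(u, v)) ∧
    ∃ T : SimpleGraph {x : V // K.degree x = 1}, T.IsTree ∧
      (∑ᶠ e ∈ T.edgeSet, w (e.map Subtype.val)) ≤
        2 * (∑ᶠ e ∈ K.edgeSet, c e) - w s(u, v) := by
  have exu := hK.existsUnique_path
  have hwle : ∀ (a b : V) (r : K.Walk a b), w s(a, b) ≤ walkCost c r := by
    intro a b r
    rw [← hw a b r.bypass r.bypass_isPath]
    exact walkCost_bypass_le hc r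
  have hw0 : ∀ e : Sym2 V, 0 ≤ w e := by
    intro e
    induction e using Sym2.ind with
    | _ a b =>
      calc (0:ℝ) ≤ walkCost c (exu a b).choose := walkCost_nonneg hc _
        _ = w s(a, b) := hw a b _ (exu a b).choose_spec.1
  have htri : ∀ a b c' : V, w s(a, c') ≤ w s(a, b) + w s(b, c') := by
    intro a b c'
    have h := hwle a c' ((exu a b).choose.append (exu b c').choose)
    rw [walkCost_append, hw a b _ (exu a b).choose_spec.1,
      hw b c' _ (exu b c').choose_spec.1] at h
    exact h
  have hedge : ∀ a b : V, K.Adj a b → w s(a, b) ≤ c s(a, b) := by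
    intro a b h
    have := hwle a b (SimpleGraph.Walk.cons h SimpleGraph.Walk.nil)
    simpa [walkCost] using this
  obtain ⟨p, q, hq, hcovp, hmult⟩ := main hK (Fintype.card V) Finset.univ
    (by simp) u v (Finset.mem_univ u) (Finset.mem_univ v)
    (fun a _ b _ => ⟨(exu a b).choose, (exu a b).choose_spec.1,
      fun _ _ => Finset.mem_univ _⟩)
  have hcov : ∀ x, x ∈ p.support := fun x => hcovp x (Finset.mem_univ x)
  have hfilter : K.edgeFinset.filter (fun e => ∀ x ∈ e, x ∈ (Finset.univ : Finset V))
      = K.edgeFinset := by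
    apply Finset.filter_true_of_mem
    intro e _
    exact fun x _ => Finset.mem_univ x
  have hsum : (∑ᶠ e ∈ K.edgeSet, c e) = ∑ e ∈ K.edgeFinset, c e := by
    rw [← finsum_mem_coe_finset, SimpleGraph.coe_edgeFinset]
  have hqw : walkCost c q = w s(u, v) := hw u v q hq
  have hcost : walkCost c p = 2 * (∑ e ∈ K.edgeFinset, c e) - w s(u, v) := by
    have hmap := congrArg (fun m : Multiset (Sym2 V) => (m.map c).sum) hmult
    simp only [hfilter, Multiset.map_add, Multiset.sum_add] at hmap
    have h1 : ((Multiset.map c (p.edges : Multiset (Sym2 V)))).sum = walkCost c p := by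
      simp [walkCost]
    have h2 : ((Multiset.map c (q.edges : Multiset (Sym2 V)))).sum = walkCost c q := by
      simp [walkCost]
    have h3 : ((Multiset.map c (2 • K.edgeFinset.val))).sum
        = 2 * ∑ e ∈ K.edgeFinset, c e := by
      rw [Multiset.map_nsmul, Multiset.sum_nsmul]
      rw [Finset.sum]
      push_cast
      ring
    rw [h1, h2, h3] at hmap
    rw [hqw] at hmap
    linarith
  have hcostf : walkCost c p = 2 * (∑ᶠ e ∈ K.edgeSet, c e) - w s(u, v) := by
    rw [hcost, hsum]
  refine ⟨⟨p, hcov, hcostf⟩, ?_⟩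
  -- part 2
  obtain ⟨t0, ht0⟩ := firstOccs_eq_cons p
  have hlfnodup : ((firstOccs p).filter (fun z => K.degree z = 1)).Nodup :=
    (firstOccs_nodup p).filter _
  have hlf_eq : (firstOccs p).filter (fun z => K.degree z = 1)
      = u :: (t0.filter (fun z => K.degree z = 1)) := by
    rw [ht0, List.filter_cons]
    simp [hu]
  have hb1 : sC w ((firstOccs p).filter (fun z => K.degree z = 1)) ≤ sC w (firstOccs p) := by
    rw [hlf_eq, ht0]
    exact sC_sublist_cons hw0 htri List.filter_sublist u
  have hb2 : sC w (firstOccs p) ≤ walkCost c p := sC_firstOccs_le hw0 htri hedge p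
  have hmemlf : ∀ z ∈ (firstOccs p).filter (fun z => K.degree z = 1), K.degree z = 1 := by
    intro z hz
    have := List.of_mem_filter hz
    simpa using this
  obtain ⟨ls, hmapval, hndls, hmemls⟩ := subtype_list (P := fun x => K.degree x = 1)
    ((firstOccs p).filter (fun z => K.degree z = 1)) hmemlf
  have hnodupls : ls.Nodup := hndls hlfnodup
  have hallls : ∀ x : {x : V // K.degree x = 1}, x ∈ ls := by
    intro x
    refine hmemls x ?_
    apply List.mem_filter.2
    exact ⟨(mem_firstOccs p x.1).2 (hcov x.1), by simp [x.2]⟩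
  have hnels : ls ≠ [] :=
    List.ne_nil_of_mem (hallls ⟨u, hu⟩)
  refine ⟨listGraph ls, listGraph_isTree hnodupls hnels hallls, ?_⟩
  rw [listGraph_finsum _ hnodupls]
  have hce : (consecEdges ls).map (fun e => w (e.map Subtype.val))
      = (consecEdges ((firstOccs p).filter (fun z => K.degree z = 1))).map w := by
    rw [← hmapval, consecEdges_map, List.map_map]
    rfl
  rw [hce]
  calc ((consecEdges ((firstOccs p).filter (fun z => K.degree z = 1))).map w).sum
      = sC w ((firstOccs p).filter (fun z => K.degree z = 1)) := rfl
    _ ≤ sC w (firstOccs p) := hb1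
    _ ≤ walkCost c p := hb2
    _ = 2 * (∑ᶠ e ∈ K.edgeSet, c e) - w s(u, v) := hcostf
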